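/- arXiv:2109.09184 — 8 statements merged into one kernel-verified Lean document; each statement's English description precedes it below -/
import Mathlib

section
/- If y(x) = c·∏_{i=1}^n (x - x_i) with c ≠ 0 and distinct roots x_i, then for x not equal to any root, (a x² + b x + c₀)·y''(x)/y(x) = a(n² − n) + 2·∑_{i=1}^n ∑_{j ≠ i} (a x_i² + b x_i + c₀)/((x_i − x_j)(x − x_i)). -/
open Polynomial Finset

theorem myder {ι : Type*} [DecidableEq ι] (s : Finset ι) (f : ι → Polynomial ℝ) :
    derivative (∏ i ∈ s, f i) = ∑ i ∈ s, (∏ j ∈ s.erase i, f j) * derivative (f i) := by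
  induction s using Finset.induction_on with
  | empty => simp
  | @insert a s ha ih =>
    have hterm : ∀ i ∈ s, (∏ j ∈ (insert a s).erase i, f j) * derivative (f i)
        = f a * ((∏ j ∈ s.erase i, f j) * derivative (f i)) := by
      intro i hi
      have hia : i ≠ a := fun h => ha (h ▸ hi)
      rw [Finset.erase_insert_of_ne hia.symm,
        Finset.prod_insert (fun h => ha (Finset.erase_subset _ _ h))]
      ring
    rw [Finset.prod_insert ha, derivative_mul, ih, Finset.sum_insert ha,
      Finset.erase_insert ha, Finset.mul_sum, Finset.sum_congr rfl hterm]
    ring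

theorem stmt_4 (n : ℕ) (c a b c₀ : ℝ) (x : Fin n → ℝ) (hc : c ≠ 0)
    (hx : Function.Injective x) (t : ℝ) (ht : ∀ i, t ≠ x i) :
    (a * t ^ 2 + b * t + c₀) * deriv (deriv (fun s => c * ∏ i, (s - x i))) t
        / (c * ∏ i, (t - x i)) =
      a * ((n : ℝ) ^ 2 - n) + 2 * ∑ i, ∑ j ∈ Finset.univ.erase i,
        (a * x i ^ 2 + b * x i + c₀) / ((x i - x j) * (t - x i)) := by
  have hne : ∀ i, t - x i ≠ 0 := fun i => sub_ne_zero.mpr (ht i)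
  set P : Polynomial ℝ := C c * ∏ i, (X - C (x i)) with hP
  have hf : (fun s => c * ∏ i, (s - x i)) = fun s => P.eval s := by
    funext s; simp [hP, eval_prod]
  have hder1 : derivative P = C c * ∑ i, ∏ j ∈ univ.erase i, (X - C (x j)) := by
    rw [hP, derivative_C_mul, myder]
    simp
  have hder2 : derivative (derivative P) =
      C c * ∑ i, ∑ j ∈ univ.erase i, ∏ k ∈ (univ.erase i).erase j, (X - C (x k)) := by
    rw [hder1, derivative_C_mul, derivative_sum]
    congr 1
    refine Finset.sum_congr rfl fun i _ => ?_
    rw [myder]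
    simp
  have hdd : deriv (deriv (fun s => c * ∏ i, (s - x i))) t
      = c * ∑ i, ∑ j ∈ univ.erase i, ∏ k ∈ (univ.erase i).erase j, (t - x k) := by
    rw [hf]
    have h1 : deriv (fun s => P.eval s) = fun s => (derivative P).eval s := by
      funext s; exact Polynomial.deriv P
    rw [h1]
    rw [show deriv (fun s => (derivative P).eval s) t
        = (derivative (derivative P)).eval t from Polynomial.deriv (derivative P)]
    rw [hder2]
    simp only [eval_mul, eval_C, eval_finset_sum, eval_prod, eval_sub, eval_X]
  rw [hdd]
  have key : ∀ i ∈ (univ : Finset (Fin n)), ∀ j ∈ univ.erase i,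
      (a * t ^ 2 + b * t + c₀) * (∏ k ∈ (univ.erase i).erase j, (t - x k))
        / (∏ i, (t - x i))
      = a + (a * x i ^ 2 + b * x i + c₀) / ((x i - x j) * (t - x i))
          + (a * x j ^ 2 + b * x j + c₀) / ((x j - x i) * (t - x j)) := by
    intro i _ j hj
    have hji : j ≠ i := (Finset.mem_erase.mp hj).1
    have hxij : x i - x j ≠ 0 := sub_ne_zero.mpr (fun h => hji (hx h.symm))
    have hxji : x j - x i ≠ 0 := sub_ne_zero.mpr (fun h => hji (hx h))
    have hQ : (∏ k ∈ (univ.erase i).erase j, (t - x k)) ≠ 0 :=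
      Finset.prod_ne_zero_iff.mpr (fun k _ => hne k)
    have hsplit : (∏ k, (t - x k))
        = (t - x i) * ((t - x j) * ∏ k ∈ (univ.erase i).erase j, (t - x k)) := by
      rw [Finset.mul_prod_erase (univ.erase i) (fun k => t - x k) hj,
        Finset.mul_prod_erase univ (fun k => t - x k) (mem_univ i)]
    rw [hsplit, show (t - x i) * ((t - x j) * ∏ k ∈ (univ.erase i).erase j, (t - x k))
        = ((t - x i) * (t - x j)) * ∏ k ∈ (univ.erase i).erase j, (t - x k) from by ring,
      mul_div_mul_right _ _ hQ]
    have h1 := hne i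
    have h2 := hne j
    field_simp
    ring
  rw [show (a * t ^ 2 + b * t + c₀) *
      (c * ∑ i, ∑ j ∈ univ.erase i, ∏ k ∈ (univ.erase i).erase j, (t - x k))
      / (c * ∏ i, (t - x i))
      = ∑ i, ∑ j ∈ univ.erase i,
        (a * t ^ 2 + b * t + c₀) * (∏ k ∈ (univ.erase i).erase j, (t - x k))
          / (∏ i, (t - x i)) from by
    rw [mul_left_comm, mul_div_mul_left _ _ hc, Finset.mul_sum, Finset.sum_div]
    refine Finset.sum_congr rfl fun i _ => ?_
    rw [Finset.mul_sum, Finset.sum_div]]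
  rw [Finset.sum_congr rfl (fun i hi => Finset.sum_congr rfl (key i hi))]
  have hswap : ∑ i, ∑ j ∈ univ.erase i,
      (a * x j ^ 2 + b * x j + c₀) / ((x j - x i) * (t - x j))
      = ∑ i, ∑ j ∈ univ.erase i,
      (a * x i ^ 2 + b * x i + c₀) / ((x i - x j) * (t - x i)) := by
    exact Finset.sum_comm' (fun i j => by
      simp only [Finset.mem_univ, Finset.mem_erase, true_and, and_true]
      exact ⟨fun h => h.symm, fun h => h.symm⟩)
  have hcard : ∑ i : Fin n, ∑ _j ∈ (univ : Finset (Fin n)).erase i, a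
      = a * ((n : ℝ) ^ 2 - n) := by
    simp only [Finset.sum_const, Finset.card_erase_of_mem (mem_univ _),
      Finset.card_univ, Fintype.card_fin, nsmul_eq_mul]
    rcases Nat.eq_zero_or_pos n with h | h
    · simp [h]
    · rw [Nat.cast_sub h]
      push_cast
      ring
  simp only [Finset.sum_add_distrib]
  rw [hswap, hcard]
  ring
end

section
/- Let y be a degree n polynomial with n distinct real roots x_1, ..., x_n satisfying (a x² + b x + c)y'' + (μ x + ν)y' + κ y = 0 for all x. Then for each k ∈ {1, ..., n}, we have 2·∑_{j ≠ k} (a x_k² + b x_k + c)/(x_k − x_j) + ν + μ x_k = 0. -/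
theorem stmt_5 (n : ℕ) (a b c μ ν κ cn : ℝ) (x : Fin n → ℝ)
    (hcn : cn ≠ 0) (hx : Function.Injective x)
    (y : ℝ → ℝ) (hy : y = fun t => cn * ∏ i, (t - x i))
    (hode : ∀ t : ℝ, (a * t ^ 2 + b * t + c) * deriv (deriv y) t
        + (μ * t + ν) * deriv y t + κ * y t = 0) :
    ∀ k : Fin n, 2 * ∑ j ∈ Finset.univ.erase k,
        (a * x k ^ 2 + b * x k + c) / (x k - x j) + ν + μ * x k = 0 := by
  intro k
  set e : Finset (Fin n) := Finset.univ.erase k with he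
  set g : ℝ → ℝ := fun t => cn * ∏ j ∈ e, (t - x j) with hg
  set g1 : ℝ → ℝ := fun t => cn * ∑ j ∈ e, ∏ l ∈ e.erase j, (t - x l) with hg1
  -- y t = (t - x k) * g t
  have hyg : y = fun t => (t - x k) * g t := by
    funext t
    simp only [hy, hg]
    rw [← Finset.mul_prod_erase Finset.univ _ (Finset.mem_univ k)]
    ring
  -- derivative facts
  have hgd : ∀ t : ℝ, HasDerivAt g (g1 t) t := by
    intro t
    have h : ∀ j ∈ e, HasDerivAt (fun s : ℝ => s - x j) 1 t :=
      fun j _ => (hasDerivAt_id t).sub_const (x j)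
    have := (HasDerivAt.finset_prod h).const_mul cn
    simpa [hg, hg1, Finset.mul_sum] using this
  have hyd : ∀ t : ℝ, HasDerivAt y (g t + (t - x k) * g1 t) t := by
    intro t
    rw [hyg]
    have := ((hasDerivAt_id t).sub_const (x k)).mul (hgd t)
    refine this.congr_deriv ?_
    simp only [id_eq]
    ring
  have hderiv_y : deriv y = fun t => g t + (t - x k) * g1 t :=
    funext fun t => (hyd t).deriv
  -- second derivative at x k
  have hg1diff : DifferentiableAt ℝ g1 (x k) := by
    apply DifferentiableAt.const_mul
    apply DifferentiableAt.fun_sum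
    intro j _
    apply DifferentiableAt.fun_finsetProd
    intro l _
    exact (differentiable_id.sub_const (x l)).differentiableAt
  have hdd : deriv (deriv y) (x k) = 2 * g1 (x k) := by
    rw [hderiv_y]
    have h1 : HasDerivAt (fun t : ℝ => (t - x k) * g1 t)
        ((x k - x k) * deriv g1 (x k) + 1 * g1 (x k)) (x k) := by
      have := ((hasDerivAt_id (x k)).sub_const (x k)).mul hg1diff.hasDerivAt
      refine this.congr_deriv ?_
      simp only [id_eq]
      ring
    have h2 : HasDerivAt (fun t : ℝ => g t + (t - x k) * g1 t)
        (g1 (x k) + ((x k - x k) * deriv g1 (x k) + 1 * g1 (x k))) (x k) :=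
      (hgd (x k)).add h1
    rw [h2.deriv]
    ring
  -- plug into ODE at x k
  have hy0 : y (x k) = 0 := by
    rw [hyg]; simp
  have hode' := hode (x k)
  rw [hdd, hderiv_y, hy0, mul_zero, add_zero] at hode'
  simp only [sub_self, zero_mul, add_zero] at hode'
  -- algebra
  set p : ℝ := ∏ j ∈ e, (x k - x j) with hp
  have hxj : ∀ j ∈ e, x k - x j ≠ 0 := by
    intro j hj
    have : j ≠ k := Finset.ne_of_mem_erase hj
    exact sub_ne_zero.mpr fun h => this (hx h.symm)
  have hpne : p ≠ 0 := Finset.prod_ne_zero_iff.mpr hxj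
  have hprod : ∀ j ∈ e, ∏ l ∈ e.erase j, (x k - x l) = p / (x k - x j) := by
    intro j hj
    rw [eq_div_iff (hxj j hj)]
    exact Finset.prod_erase_mul e _ hj
  have hg1v : g1 (x k) = cn * p * ∑ j ∈ e, (x k - x j)⁻¹ := by
    simp only [hg1]
    rw [Finset.sum_congr rfl hprod]
    simp only [div_eq_mul_inv, ← Finset.mul_sum]
    ring
  have hgv : g (x k) = cn * p := rfl
  rw [hg1v, hgv] at hode'
  set Q : ℝ := a * x k ^ 2 + b * x k + c with hQ
  set S : ℝ := ∑ j ∈ e, (x k - x j)⁻¹ with hS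
  have key : 2 * Q * S + (μ * x k + ν) = 0 := by
    have hcp : cn * p ≠ 0 := mul_ne_zero hcn hpne
    have : (2 * Q * S + (μ * x k + ν)) * (cn * p) = 0 := by
      rw [← hode']; ring
    exact (mul_eq_zero.mp this).resolve_right hcp
  have hsum : ∑ j ∈ e, Q / (x k - x j) = Q * S := by
    rw [hS, Finset.mul_sum]
    exact Finset.sum_congr rfl fun j _ => div_eq_mul_inv _ _
  rw [hsum]
  linarith [key]
end

section
/- Let y be a degree n polynomial with n distinct real roots x_1, ..., x_n satisfying the Hermite differential equation y'' − 2x y' + 2n y = 0. Then for each k, ∑_{j ≠ k} 1/(x_k − x_j) − x_k = 0. -/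
open Polynomial Finset

lemma derivative_finset_prod' {ι : Type*} [DecidableEq ι] (s : Finset ι) (f : ι → Polynomial ℝ) :
    Polynomial.derivative (∏ i ∈ s, f i)
      = ∑ i ∈ s, (∏ j ∈ s.erase i, f j) * Polynomial.derivative (f i) := by
  induction s using Finset.induction_on with
  | empty => simp
  | @insert a s ha ih =>
    rw [Finset.prod_insert ha, Polynomial.derivative_mul, ih, Finset.mul_sum,
      Finset.sum_insert ha, Finset.erase_insert ha]
    congr 1
    · ring
    · refine Finset.sum_congr rfl fun i hi => ?_
      have hia : i ≠ a := fun h => ha (h ▸ hi)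
      rw [Finset.erase_insert_of_ne hia.symm,
        Finset.prod_insert (fun h => ha (Finset.mem_of_mem_erase h))]
      ring

theorem stmt_7 (n : ℕ) (cn : ℝ) (x : Fin n → ℝ)
    (hcn : cn ≠ 0) (hx : Function.Injective x)
    (y : ℝ → ℝ) (hy : y = fun t => cn * ∏ i, (t - x i))
    (hode : ∀ t : ℝ, deriv (deriv y) t - 2 * t * deriv y t + 2 * n * y t = 0) :
    ∀ k : Fin n, ∑ j ∈ Finset.univ.erase k, 1 / (x k - x j) - x k = 0 := by
  intro k
  set P : ℝ[X] := C cn * ∏ i, (X - C (x i)) with hP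
  have hyP : y = fun t => P.eval t := by
    funext t; simp [hy, hP, eval_prod]
  have hd1 : deriv y = fun t => (derivative P).eval t := by
    rw [hyP]; funext t; exact Polynomial.deriv P
  have hd2 : deriv (deriv y) = fun t => (derivative (derivative P)).eval t := by
    rw [hd1]; funext t; exact Polynomial.deriv _
  -- P' expression
  have hP1 : derivative P = C cn * ∑ i : Fin n, ∏ j ∈ univ.erase i, (X - C (x j)) := by
    rw [hP, derivative_C_mul, derivative_finset_prod']
    congr 1
    refine Finset.sum_congr rfl fun i _ => ?_
    simp
  have hP2 : derivative (derivative P)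
      = C cn * ∑ i : Fin n, ∑ l ∈ univ.erase i, ∏ j ∈ (univ.erase i).erase l, (X - C (x j)) := by
    rw [hP1, derivative_C_mul, derivative_sum]
    congr 1
    refine Finset.sum_congr rfl fun i _ => ?_
    rw [derivative_finset_prod']
    refine Finset.sum_congr rfl fun l _ => ?_
    simp
  have hne : ∀ j ∈ univ.erase k, x k - x j ≠ 0 := by
    intro j hj
    have : j ≠ k := (Finset.mem_erase.mp hj).1
    exact sub_ne_zero.mpr fun h => this (hx h.symm)
  set D : ℝ := ∏ j ∈ univ.erase k, (x k - x j) with hD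
  have hDne : D ≠ 0 := Finset.prod_ne_zero_iff.mpr hne
  -- eval P at x k is 0
  have hPk : P.eval (x k) = 0 := by
    simp only [hP, eval_mul, eval_C, eval_prod, eval_sub, eval_X]
    rw [Finset.prod_eq_zero (Finset.mem_univ k) (sub_self (x k))]
    ring
  -- eval P' at x k
  have hA : (derivative P).eval (x k) = cn * D := by
    simp only [hP1, eval_mul, eval_C, eval_finset_sum, eval_prod, eval_sub, eval_X]
    congr 1
    rw [Finset.sum_eq_single k]
    · intro i _ hik
      exact Finset.prod_eq_zero (Finset.mem_erase.mpr ⟨(Ne.symm hik), Finset.mem_univ k⟩)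
        (sub_self (x k))
    · intro h; exact absurd (Finset.mem_univ k) h
  -- eval P'' at x k
  have hB : (derivative (derivative P)).eval (x k)
      = 2 * cn * ∑ i ∈ univ.erase k, ∏ j ∈ (univ.erase k).erase i, (x k - x j) := by
    simp only [hP2, eval_mul, eval_C, eval_finset_sum, eval_prod, eval_sub, eval_X]
    rw [Finset.sum_eq_add_sum_sdiff_singleton_of_mem (Finset.mem_univ k)]
    have h1 : ∑ i ∈ univ \ {k}, ∑ l ∈ univ.erase i, ∏ j ∈ (univ.erase i).erase l, (x k - x j)
        = ∑ i ∈ univ.erase k, ∏ j ∈ (univ.erase k).erase i, (x k - x j) := by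
      rw [Finset.sdiff_singleton_eq_erase]
      refine Finset.sum_congr rfl fun i hi => ?_
      have hik : i ≠ k := (Finset.mem_erase.mp hi).1
      rw [Finset.sum_eq_single k]
      · rw [Finset.erase_right_comm]
      · intro l hl hlk
        refine Finset.prod_eq_zero (Finset.mem_erase.mpr ⟨Ne.symm hlk,
          Finset.mem_erase.mpr ⟨Ne.symm hik, Finset.mem_univ k⟩⟩) (sub_self (x k))
      · intro h
        exact absurd (Finset.mem_erase.mpr ⟨Ne.symm hik, Finset.mem_univ k⟩) h
    rw [h1]; ring
  -- ODE at x k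
  have hodek := hode (x k)
  have hy0 : y (x k) = 0 := by rw [hyP]; exact hPk
  rw [hd2, hd1, hy0] at hodek
  simp only [mul_zero, add_zero] at hodek
  have hBA : (derivative (derivative P)).eval (x k) = 2 * x k * (derivative P).eval (x k) := by
    linarith
  rw [hA, hB] at hBA
  -- now compute the sum
  have hsum : ∑ j ∈ univ.erase k, 1 / (x k - x j)
      = (∑ i ∈ univ.erase k, ∏ j ∈ (univ.erase k).erase i, (x k - x j)) / D := by
    rw [Finset.sum_div]
    refine Finset.sum_congr rfl fun i hi => ?_
    have hDi : D = (x k - x i) * ∏ j ∈ (univ.erase k).erase i, (x k - x j) :=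
      (Finset.mul_prod_erase _ _ hi).symm
    rw [hDi]
    have hxi : x k - x i ≠ 0 := hne i hi
    have hpi : (∏ j ∈ (univ.erase k).erase i, (x k - x j)) ≠ 0 :=
      Finset.prod_ne_zero_iff.mpr fun j hj => hne j (Finset.mem_of_mem_erase hj)
    field_simp
  have hS : ∑ i ∈ univ.erase k, ∏ j ∈ (univ.erase k).erase i, (x k - x j) = x k * D := by
    have h2 : (2 : ℝ) * cn ≠ 0 := mul_ne_zero two_ne_zero hcn
    apply mul_left_cancel₀ h2
    rw [hBA]; ring
  rw [hsum, hS, mul_div_assoc, div_self hDne, mul_one, sub_self]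
end

section
/- Let α > −1 and let y be a degree n polynomial with n distinct positive roots x_1, ..., x_n satisfying the Laguerre differential equation x y'' + (α + 1 − x)y' + n y = 0. Then for each k, ∑_{j ≠ k} 1/(x_k − x_j) + (α+1)/(2 x_k) − 1/2 = 0. -/
open Polynomial Finset

private lemma derivative_prod_linear {ι : Type*} [DecidableEq ι] (s : Finset ι) (x : ι → ℝ) :
    derivative (∏ i ∈ s, (X - C (x i))) = ∑ i ∈ s, ∏ j ∈ s.erase i, (X - C (x j)) := by
  induction s using Finset.induction with
  | empty => simp
  | @insert a s ha ih =>
    rw [Finset.prod_insert ha, derivative_mul, ih, Finset.sum_insert ha,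
      Finset.erase_insert ha]
    simp only [derivative_sub, derivative_X, derivative_C, sub_zero, one_mul]
    rw [Finset.mul_sum]
    congr 1
    refine Finset.sum_congr rfl fun i hi => ?_
    have hia : i ≠ a := fun h => ha (h ▸ hi)
    rw [Finset.erase_insert_of_ne hia.symm, Finset.prod_insert (fun h => ha (Finset.mem_of_mem_erase h))]

theorem stmt_8 (n : ℕ) (α cn : ℝ) (hα : -1 < α) (x : Fin n → ℝ)
    (hcn : cn ≠ 0) (hx : Function.Injective x) (hpos : ∀ i, 0 < x i)
    (y : ℝ → ℝ) (hy : y = fun t => cn * ∏ i, (t - x i))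
    (hode : ∀ t : ℝ, t * deriv (deriv y) t + (α + 1 - t) * deriv y t + n * y t = 0) :
    ∀ k : Fin n, ∑ j ∈ Finset.univ.erase k, 1 / (x k - x j)
        + (α + 1) / (2 * x k) - 1 / 2 = 0 := by
  classical
  intro k
  have hxkne : x k ≠ 0 := ne_of_gt (hpos k)
  have hne : ∀ j, j ≠ k → x k - x j ≠ 0 := by
    intro j hj
    exact sub_ne_zero.mpr fun h => hj (hx h.symm)
  set P : ℝ[X] := C cn * ∏ i, (X - C (x i)) with hP
  have hyP : y = fun t => P.eval t := by
    funext t; simp [hy, hP, eval_prod]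
  have hd1 : deriv y = fun t => P.derivative.eval t := by
    funext t; rw [hyP]; exact Polynomial.deriv (p := P)
  have hd2 : ∀ t, deriv (deriv y) t = P.derivative.derivative.eval t := by
    intro t; rw [hd1]; exact Polynomial.deriv (p := P.derivative)
  have hdP : P.derivative = C cn * ∑ i, ∏ j ∈ univ.erase i, (X - C (x j)) := by
    rw [hP, derivative_C_mul, derivative_prod_linear]
  have hddP : P.derivative.derivative
      = C cn * ∑ i, ∑ j ∈ univ.erase i, ∏ l ∈ (univ.erase i).erase j, (X - C (x l)) := by
    rw [hdP, derivative_C_mul, map_sum]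
    congr 1
    exact Finset.sum_congr rfl fun i _ => derivative_prod_linear _ _
  set Q : ℝ := ∏ j ∈ univ.erase k, (x k - x j) with hQ
  have hQne : Q ≠ 0 :=
    Finset.prod_ne_zero_iff.mpr fun j hj => hne j (Finset.ne_of_mem_erase hj)
  set T : ℝ := ∑ j ∈ univ.erase k, ∏ l ∈ (univ.erase k).erase j, (x k - x l) with hT
  have hA : P.derivative.eval (x k) = cn * Q := by
    rw [hdP]
    simp only [eval_mul, eval_C, eval_finset_sum, eval_prod, eval_sub, eval_X]
    congr 1
    refine Finset.sum_eq_single k ?_ (by simp)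
    intro i _ hik
    exact Finset.prod_eq_zero (Finset.mem_erase.mpr ⟨Ne.symm hik, Finset.mem_univ k⟩)
      (sub_self _)
  have hB : P.derivative.derivative.eval (x k) = cn * (2 * T) := by
    rw [hddP]
    simp only [eval_mul, eval_C, eval_finset_sum, eval_prod, eval_sub, eval_X]
    congr 1
    rw [← Finset.add_sum_erase _ _ (Finset.mem_univ k)]
    have h1 : ∑ i ∈ univ.erase k, ∑ j ∈ univ.erase i,
        ∏ l ∈ (univ.erase i).erase j, (x k - x l) = T := by
      rw [hT]
      refine Finset.sum_congr rfl fun i hi => ?_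
      have hik : i ≠ k := Finset.ne_of_mem_erase hi
      have hk : k ∈ univ.erase i := Finset.mem_erase.mpr ⟨Ne.symm hik, Finset.mem_univ k⟩
      rw [Finset.sum_eq_single k ?_ (fun h => absurd hk h)]
      · rw [Finset.erase_right_comm]
      · intro j hj hjk
        exact Finset.prod_eq_zero
          (Finset.mem_erase.mpr ⟨Ne.symm hjk, hk⟩) (sub_self _)
    rw [h1]
    ring
  set S : ℝ := ∑ j ∈ univ.erase k, 1 / (x k - x j) with hS
  have hSQ : S * Q = T := by
    rw [hS, hT, Finset.sum_mul]
    refine Finset.sum_congr rfl fun j hj => ?_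
    have hjk : x k - x j ≠ 0 := hne j (Finset.ne_of_mem_erase hj)
    rw [hQ, ← Finset.mul_prod_erase _ _ hj, ← mul_assoc, one_div,
      inv_mul_cancel₀ hjk, one_mul]
  have hy0 : y (x k) = 0 := by
    rw [hy]
    simp only
    rw [Finset.prod_eq_zero (Finset.mem_univ k) (sub_self (x k)), mul_zero]
  have key : 2 * x k * S + (α + 1 - x k) = 0 := by
    have h0 := hode (x k)
    rw [hd2, hd1] at h0
    simp only at h0
    rw [hA, hB, hy0, mul_zero, add_zero] at h0
    have h2 : cn * Q * (2 * x k * S + (α + 1 - x k)) = 0 := by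
      linear_combination h0 + 2 * x k * cn * hSQ
    exact (mul_eq_zero.mp h2).resolve_left (mul_ne_zero hcn hQne)
  have hgoal : S + (α + 1) / (2 * x k) - 1 / 2 = 0 := by
    field_simp
    linarith [key]
  exact hgoal
end

section
/- Let α, β > −1. The function ln f(x⃗) = ∑_{k=1}^n [(α+1)/2 · ln(1 − x_k) + (β+1)/2 · ln(1 + x_k)] + ∑_{i<j} ln(x_j − x_i) is strictly concave on D_n = {x⃗ ∈ ℝⁿ : −1 < x_1 < ... < x_n < 1}, and hence has at most one critical point in D_n. -/
open Set Real

private lemma log_comb_le {a b u v : ℝ} (ha : 0 < a) (hb : 0 < b) (hab : a + b = 1)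
    (hu : 0 < u) (hv : 0 < v) :
    a * Real.log u + b * Real.log v ≤ Real.log (a * u + b * v) := by
  have := strictConcaveOn_log_Ioi.concaveOn.2 (Set.mem_Ioi.2 hu) (Set.mem_Ioi.2 hv)
    ha.le hb.le hab
  simpa [smul_eq_mul] using this

private lemma log_comb_lt {a b u v : ℝ} (ha : 0 < a) (hb : 0 < b) (hab : a + b = 1)
    (hu : 0 < u) (hv : 0 < v) (huv : u ≠ v) :
    a * Real.log u + b * Real.log v < Real.log (a * u + b * v) := by
  have := strictConcaveOn_log_Ioi.2 (Set.mem_Ioi.2 hu) (Set.mem_Ioi.2 hv) huv ha hb hab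
  simpa [smul_eq_mul] using this

theorem stmt_10 (n : ℕ) (hn : 1 ≤ n) (α β : ℝ) (hα : -1 < α) (hβ : -1 < β)
    (F : (Fin n → ℝ) → ℝ)
    (hF : F = fun x => (∑ k, ((α + 1) / 2 * Real.log (1 - x k)
        + (β + 1) / 2 * Real.log (1 + x k)))
      + ∑ i, ∑ j ∈ Finset.univ.filter (fun j => i < j), Real.log (x j - x i))
    (D : Set (Fin n → ℝ))
    (hD : D = {x | StrictMono x ∧ ∀ k, x k ∈ Set.Ioo (-1 : ℝ) 1}) :
    StrictConcaveOn ℝ D F ∧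
      ∀ x ∈ D, ∀ y ∈ D, fderiv ℝ F x = 0 → fderiv ℝ F y = 0 → x = y := by
  subst hD
  set D : Set (Fin n → ℝ) := {x | StrictMono x ∧ ∀ k, x k ∈ Set.Ioo (-1 : ℝ) 1} with hDdef
  have hc1 : (0:ℝ) < (α + 1) / 2 := by linarith
  have hc2 : (0:ℝ) < (β + 1) / 2 := by linarith
  -- convexity of D
  have hDconv : Convex ℝ D := by
    intro x hx y hy a b ha hb hab
    refine ⟨?_, fun k => ?_⟩
    · intro i j hij
      simp only [Pi.add_apply, Pi.smul_apply, smul_eq_mul]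
      rcases eq_or_lt_of_le ha with h | h
      · have hb1 : b = 1 := by linarith
        simpa [← h, hb1] using hy.1 hij
      · have t1 := mul_lt_mul_of_pos_left (hx.1 hij) h
        have t2 := mul_le_mul_of_nonneg_left (hy.1 hij).le hb
        linarith
    · have := (convex_Ioo (-1:ℝ) 1) (hx.2 k) (hy.2 k) ha hb hab
      simpa [smul_eq_mul] using this
  -- the strict concavity
  have hstrict : StrictConcaveOn ℝ D F := by
    rw [hF]
    refine ⟨hDconv, ?_⟩
    intro x hx y hy hxy a b ha hb hab
    set z : Fin n → ℝ := a • x + b • y with hz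
    have hzk : ∀ k, z k = a * x k + b * y k := by
      intro k; simp [hz, smul_eq_mul]
    have hzD : z ∈ D := hDconv hx hy ha.le hb.le hab
    -- per-coordinate inequality for the single-variable part
    have gle : ∀ k : Fin n,
        a * ((α + 1) / 2 * Real.log (1 - x k) + (β + 1) / 2 * Real.log (1 + x k))
        + b * ((α + 1) / 2 * Real.log (1 - y k) + (β + 1) / 2 * Real.log (1 + y k))
        ≤ (α + 1) / 2 * Real.log (1 - z k) + (β + 1) / 2 * Real.log (1 + z k) := by
      intro k
      have hxk := hx.2 k; have hyk := hy.2 k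
      simp only [Set.mem_Ioo] at hxk hyk
      have h1 : a * Real.log (1 - x k) + b * Real.log (1 - y k)
          ≤ Real.log (a * (1 - x k) + b * (1 - y k)) :=
        log_comb_le ha hb hab (by linarith) (by linarith)
      have h2 : a * Real.log (1 + x k) + b * Real.log (1 + y k)
          ≤ Real.log (a * (1 + x k) + b * (1 + y k)) :=
        log_comb_le ha hb hab (by linarith) (by linarith)
      have e1 : a * (1 - x k) + b * (1 - y k) = 1 - z k := by rw [hzk]; linarith [hab]
      have e2 : a * (1 + x k) + b * (1 + y k) = 1 + z k := by rw [hzk]; linarith [hab]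
      rw [e1] at h1; rw [e2] at h2
      nlinarith [mul_le_mul_of_nonneg_left h1 hc1.le, mul_le_mul_of_nonneg_left h2 hc2.le]
    have glt : ∀ k : Fin n, x k ≠ y k →
        a * ((α + 1) / 2 * Real.log (1 - x k) + (β + 1) / 2 * Real.log (1 + x k))
        + b * ((α + 1) / 2 * Real.log (1 - y k) + (β + 1) / 2 * Real.log (1 + y k))
        < (α + 1) / 2 * Real.log (1 - z k) + (β + 1) / 2 * Real.log (1 + z k) := by
      intro k hk
      have hxk := hx.2 k; have hyk := hy.2 k
      simp only [Set.mem_Ioo] at hxk hyk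
      have h1 : a * Real.log (1 - x k) + b * Real.log (1 - y k)
          < Real.log (a * (1 - x k) + b * (1 - y k)) :=
        log_comb_lt ha hb hab (by linarith) (by linarith) (by intro h; apply hk; linarith)
      have h2 : a * Real.log (1 + x k) + b * Real.log (1 + y k)
          ≤ Real.log (a * (1 + x k) + b * (1 + y k)) :=
        log_comb_le ha hb hab (by linarith) (by linarith)
      have e1 : a * (1 - x k) + b * (1 - y k) = 1 - z k := by rw [hzk]; linarith [hab]
      have e2 : a * (1 + x k) + b * (1 + y k) = 1 + z k := by rw [hzk]; linarith [hab]
      rw [e1] at h1; rw [e2] at h2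
      nlinarith [mul_lt_mul_of_pos_left h1 hc1, mul_le_mul_of_nonneg_left h2 hc2.le]
    -- strict inequality for the first sum
    have hS1 : a * (∑ k, ((α + 1) / 2 * Real.log (1 - x k) + (β + 1) / 2 * Real.log (1 + x k)))
        + b * (∑ k, ((α + 1) / 2 * Real.log (1 - y k) + (β + 1) / 2 * Real.log (1 + y k)))
        < ∑ k, ((α + 1) / 2 * Real.log (1 - z k) + (β + 1) / 2 * Real.log (1 + z k)) := by
      rw [Finset.mul_sum, Finset.mul_sum, ← Finset.sum_add_distrib]
      obtain ⟨k0, hk0⟩ := Function.ne_iff.1 hxy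
      refine Finset.sum_lt_sum (fun k _ => ?_) ⟨k0, Finset.mem_univ _, glt k0 hk0⟩
      by_cases h : x k = y k
      · have e : z k = x k := by rw [hzk, ← h]; linear_combination (x k) * hab
        rw [e, ← h]
        have : a * ((α + 1) / 2 * Real.log (1 - x k) + (β + 1) / 2 * Real.log (1 + x k))
            + b * ((α + 1) / 2 * Real.log (1 - x k) + (β + 1) / 2 * Real.log (1 + x k))
            = (α + 1) / 2 * Real.log (1 - x k) + (β + 1) / 2 * Real.log (1 + x k) := by
          linear_combination ((α + 1) / 2 * Real.log (1 - x k)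
            + (β + 1) / 2 * Real.log (1 + x k)) * hab
        exact this.le
      · exact (glt k h).le
    -- non-strict inequality for the second sum
    have hS2 : a * (∑ i, ∑ j ∈ Finset.univ.filter (fun j => i < j), Real.log (x j - x i))
        + b * (∑ i, ∑ j ∈ Finset.univ.filter (fun j => i < j), Real.log (y j - y i))
        ≤ ∑ i, ∑ j ∈ Finset.univ.filter (fun j => i < j), Real.log (z j - z i) := by
      rw [Finset.mul_sum, Finset.mul_sum, ← Finset.sum_add_distrib]
      refine Finset.sum_le_sum (fun i _ => ?_)
      rw [Finset.mul_sum, Finset.mul_sum, ← Finset.sum_add_distrib]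
      refine Finset.sum_le_sum (fun j hj => ?_)
      have hij : i < j := (Finset.mem_filter.1 hj).2
      have h1 : 0 < x j - x i := sub_pos.2 (hx.1 hij)
      have h2 : 0 < y j - y i := sub_pos.2 (hy.1 hij)
      have := log_comb_le ha hb hab h1 h2
      have e : a * (x j - x i) + b * (y j - y i) = z j - z i := by
        rw [hzk, hzk]; ring
      rwa [e] at this
    simp only [smul_eq_mul]
    calc a * ((∑ k, ((α + 1) / 2 * Real.log (1 - x k) + (β + 1) / 2 * Real.log (1 + x k)))
            + ∑ i, ∑ j ∈ Finset.univ.filter (fun j => i < j), Real.log (x j - x i))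
        + b * ((∑ k, ((α + 1) / 2 * Real.log (1 - y k) + (β + 1) / 2 * Real.log (1 + y k)))
            + ∑ i, ∑ j ∈ Finset.univ.filter (fun j => i < j), Real.log (y j - y i))
        = (a * (∑ k, ((α + 1) / 2 * Real.log (1 - x k) + (β + 1) / 2 * Real.log (1 + x k)))
            + b * (∑ k, ((α + 1) / 2 * Real.log (1 - y k) + (β + 1) / 2 * Real.log (1 + y k))))
          + (a * (∑ i, ∑ j ∈ Finset.univ.filter (fun j => i < j), Real.log (x j - x i))
            + b * (∑ i, ∑ j ∈ Finset.univ.filter (fun j => i < j), Real.log (y j - y i))) := by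
          ring
      _ < (∑ k, ((α + 1) / 2 * Real.log (1 - z k) + (β + 1) / 2 * Real.log (1 + z k)))
          + ∑ i, ∑ j ∈ Finset.univ.filter (fun j => i < j), Real.log (z j - z i) :=
          add_lt_add_of_lt_of_le hS1 hS2
  refine ⟨hstrict, ?_⟩
  -- differentiability on D
  have hdiff : ∀ x ∈ D, DifferentiableAt ℝ F x := by
    intro x hx
    rw [hF]
    have hproj : ∀ k : Fin n, DifferentiableAt ℝ (fun z : Fin n → ℝ => z k) x :=
      fun k => (ContinuousLinearMap.proj k : (Fin n → ℝ) →L[ℝ] ℝ).differentiableAt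
    refine DifferentiableAt.add ?_ ?_
    · refine DifferentiableAt.fun_sum (fun k _ => ?_)
      have hxk := hx.2 k
      simp only [Set.mem_Ioo] at hxk
      refine DifferentiableAt.add ?_ ?_
      · exact (((differentiableAt_const _).fun_sub (hproj k)).log (by
          intro h; nlinarith [hxk.2])).const_mul _
      · exact (((differentiableAt_const _).fun_add (hproj k)).log (by
          intro h; nlinarith [hxk.1])).const_mul _
    · refine DifferentiableAt.fun_sum (fun i _ => ?_)
      refine DifferentiableAt.fun_sum (fun j hj => ?_)
      have hij : i < j := (Finset.mem_filter.1 hj).2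
      exact ((hproj j).fun_sub (hproj i)).log (by
        have := sub_pos.2 (hx.1 hij); intro h; rw [h] at this; exact lt_irrefl 0 this)
  intro x hx y hy hfx hfy
  by_contra hne
  set p : ℝ → (Fin n → ℝ) := fun t => x + t • (y - x) with hp
  have hpderiv : ∀ t : ℝ, HasDerivAt p (y - x) t := by
    intro t
    have : HasDerivAt (fun t : ℝ => t • (y - x)) ((1:ℝ) • (y - x)) t :=
      (hasDerivAt_id t).smul_const (y - x)
    simpa [hp] using this.const_add x
  have hpmem : ∀ t ∈ Icc (0:ℝ) 1, p t ∈ D := by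
    intro t ht
    have : (1 - t) • x + t • y ∈ D := hDconv hx hy (by linarith [ht.2]) ht.1 (by ring)
    convert this using 1
    funext k
    simp [hp, smul_eq_mul]
    ring
  have hp0 : p 0 = x := by funext k; simp [hp]
  have hp1 : p 1 = y := by funext k; simp [hp]
  set G : ℝ → ℝ := F ∘ p with hG
  have hgconc : StrictConcaveOn ℝ (Icc (0:ℝ) 1) G := by
    refine ⟨convex_Icc 0 1, ?_⟩
    intro s hs t ht hst a b ha hb hab
    have hb' : b = 1 - a := by linarith
    subst hb'
    have hcomb : p (a * s + (1 - a) * t) = a • p s + (1 - a) • p t := by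
      funext k
      simp [hp, smul_eq_mul]
      ring
    have hpne : p s ≠ p t := by
      intro h
      have hyx : y - x ≠ 0 := sub_ne_zero.2 (fun h' => hne h'.symm)
      have h2 : (s - t) • (y - x) = 0 := by
        have h3 := sub_eq_zero.2 h
        simpa [hp, sub_smul, add_sub_add_left_eq_sub] using h3
      rcases smul_eq_zero.1 h2 with h' | h'
      · exact hst (by linarith [sub_eq_zero.1 h'])
      · exact hyx h'
    have := hstrict.2 (hpmem s hs) (hpmem t ht) hpne ha hb hab
    simp only [hG, Function.comp_apply, smul_eq_mul]
    rw [hcomb]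
    simpa [smul_eq_mul] using this
  have hd0 : HasDerivAt G 0 0 := by
    have hF0 : HasFDerivAt F (0 : (Fin n → ℝ) →L[ℝ] ℝ) (p 0) := by
      rw [hp0, ← hfx]
      exact (hdiff x hx).hasFDerivAt
    have := hF0.comp_hasDerivAt 0 (hpderiv 0)
    simpa [hG] using this
  have hd1 : HasDerivAt G 0 1 := by
    have hF1 : HasFDerivAt F (0 : (Fin n → ℝ) →L[ℝ] ℝ) (p 1) := by
      rw [hp1, ← hfy]
      exact (hdiff y hy).hasFDerivAt
    have := hF1.comp_hasDerivAt 1 (hpderiv 1)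
    simpa [hG] using this
  have h01 : (0:ℝ) ∈ Icc (0:ℝ) 1 := by constructor <;> norm_num
  have h11 : (1:ℝ) ∈ Icc (0:ℝ) 1 := by constructor <;> norm_num
  have A := hgconc.slope_lt_of_hasDerivAt h01 h11 one_pos hd0
  have B := hgconc.lt_slope_of_hasDerivAt h01 h11 one_pos hd1
  linarith
end

section
/- The function ln f(x⃗) = ∑_{i<j} ln(x_j − x_i) − (1/2)∑_{k=1}^n x_k² is strictly concave on D_n = {x⃗ ∈ ℝⁿ : x_1 < ... < x_n}, and hence has at most one critical point in D_n. -/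
open Finset Set

section aux

variable {E : Type*} [AddCommGroup E] [Module ℝ E]

lemma concaveOn_finset_sum {ι : Type*} {s : Set E} (t : Finset ι) (f : ι → E → ℝ)
    (hs : Convex ℝ s) (h : ∀ i ∈ t, ConcaveOn ℝ s (f i)) :
    ConcaveOn ℝ s (fun x => ∑ i ∈ t, f i x) := by
  classical
  induction t using Finset.induction_on with
  | empty => simpa using concaveOn_const (0 : ℝ) hs
  | @insert a t ha ih =>
    simp only [Finset.sum_insert ha]
    exact (h a (Finset.mem_insert_self a t)).add
      (ih fun i hi => h i (Finset.mem_insert_of_mem hi))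

lemma convex_strictMono (n : ℕ) : Convex ℝ {x : Fin n → ℝ | StrictMono x} := by
  intro x hx y hy a b ha hb hab
  intro i j hij
  have h1 : x i < x j := hx hij
  have h2 : y i < y j := hy hij
  simp only [Pi.add_apply, Pi.smul_apply, smul_eq_mul]
  rcases lt_or_ge 0 a with ha' | ha'
  · have t1 := mul_lt_mul_of_pos_left h1 ha'
    have t2 := mul_le_mul_of_nonneg_left h2.le hb
    linarith
  · have ha0 : a = 0 := le_antisymm ha' ha
    have hb1 : b = 1 := by linarith
    rw [ha0, hb1]
    simpa using h2

lemma strictConvexOn_half_sumsq (n : ℕ) {s : Set (Fin n → ℝ)} (hs : Convex ℝ s) :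
    StrictConvexOn ℝ s (fun x : Fin n → ℝ => (1 / 2 : ℝ) * ∑ k, (x k) ^ 2) := by
  refine ⟨hs, fun x _ y _ hxy a b ha hb hab => ?_⟩
  have key : ∑ k, (a * x k + b * y k) ^ 2 < a * ∑ k, (x k) ^ 2 + b * ∑ k, (y k) ^ 2 := by
    obtain ⟨k0, hk0⟩ : ∃ k, x k ≠ y k := by
      by_contra h; push_neg at h; exact hxy (funext h)
    rw [Finset.mul_sum, Finset.mul_sum, ← Finset.sum_add_distrib]
    refine Finset.sum_lt_sum (fun k _ => ?_) ⟨k0, Finset.mem_univ _, ?_⟩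
    · nlinarith [mul_nonneg (mul_nonneg ha.le hb.le) (sq_nonneg (x k - y k))]
    · have h1 : (0 : ℝ) < (x k0 - y k0) ^ 2 :=
        lt_of_le_of_ne (sq_nonneg _) (Ne.symm (pow_ne_zero 2 (sub_ne_zero.2 hk0)))
      nlinarith [mul_pos (mul_pos ha hb) h1]
  simp only [Pi.add_apply, Pi.smul_apply, smul_eq_mul]
  linarith

lemma concave_logpart (n : ℕ) :
    ConcaveOn ℝ {x : Fin n → ℝ | StrictMono x}
      (fun x : Fin n → ℝ => ∑ i, ∑ j ∈ Finset.univ.filter (fun j => i < j),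
        Real.log (x j - x i)) := by
  have hD := convex_strictMono n
  refine concaveOn_finset_sum _ _ hD fun i _ => ?_
  refine concaveOn_finset_sum _ _ hD fun j hj => ?_
  have hij : i < j := by simpa using hj
  have hcomp :=
    (strictConcaveOn_log_Ioi.concaveOn.comp_affineMap
      (((LinearMap.proj j : (Fin n → ℝ) →ₗ[ℝ] ℝ) -
        (LinearMap.proj i : (Fin n → ℝ) →ₗ[ℝ] ℝ)).toAffineMap))
  refine (hcomp.subset (fun x hx => ?_) hD)
  have : (0 : ℝ) < x j - x i := sub_pos.2 (hx hij)
  simpa using this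

lemma diffAt_F (n : ℕ) (x : Fin n → ℝ) (hx : StrictMono x) :
    DifferentiableAt ℝ (fun x : Fin n → ℝ =>
      (∑ i, ∑ j ∈ Finset.univ.filter (fun j => i < j), Real.log (x j - x i)) -
        (1 / 2 : ℝ) * ∑ k, (x k) ^ 2) x := by
  apply DifferentiableAt.sub
  · apply DifferentiableAt.fun_sum
    intro i _
    apply DifferentiableAt.fun_sum
    intro j hj
    have hij : i < j := by simpa using hj
    have h1 : DifferentiableAt ℝ (fun y : Fin n → ℝ => y j) x :=
      (ContinuousLinearMap.proj j : (Fin n → ℝ) →L[ℝ] ℝ).differentiableAt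
    have h2 : DifferentiableAt ℝ (fun y : Fin n → ℝ => y i) x :=
      (ContinuousLinearMap.proj i : (Fin n → ℝ) →L[ℝ] ℝ).differentiableAt
    exact DifferentiableAt.log (h1.sub h2) (ne_of_gt (sub_pos.2 (hx hij)))
  · apply DifferentiableAt.const_mul
    apply DifferentiableAt.fun_sum
    intro k _
    have hk : DifferentiableAt ℝ (fun y : Fin n → ℝ => y k) x :=
      (ContinuousLinearMap.proj k : (Fin n → ℝ) →L[ℝ] ℝ).differentiableAt
    exact hk.pow 2

end aux

theorem stmt_12 (n : ℕ) (hn : 1 ≤ n)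
    (F : (Fin n → ℝ) → ℝ)
    (hF : F = fun x => (∑ i, ∑ j ∈ Finset.univ.filter (fun j => i < j),
        Real.log (x j - x i)) - (1 / 2) * ∑ k, (x k) ^ 2)
    (D : Set (Fin n → ℝ)) (hD : D = {x | StrictMono x}) :
    StrictConcaveOn ℝ D F ∧
      ∀ x ∈ D, ∀ y ∈ D, fderiv ℝ F x = 0 → fderiv ℝ F y = 0 → x = y := by
  subst hF hD
  set D : Set (Fin n → ℝ) := {x | StrictMono x} with hDdef
  have hDconv : Convex ℝ D := convex_strictMono n
  set F : (Fin n → ℝ) → ℝ := fun x =>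
    (∑ i, ∑ j ∈ Finset.univ.filter (fun j => i < j), Real.log (x j - x i)) -
      (1 / 2 : ℝ) * ∑ k, (x k) ^ 2 with hFdef
  have hconc : StrictConcaveOn ℝ D F := by
    have h1 := concave_logpart n
    have h2 := (strictConvexOn_half_sumsq n hDconv).neg
    have key := h1.add_strictConcaveOn h2
    have heq : F = (fun x : Fin n → ℝ => ∑ i, ∑ j ∈ Finset.univ.filter (fun j => i < j),
        Real.log (x j - x i)) + -(fun x : Fin n → ℝ => (1 / 2 : ℝ) * ∑ k, (x k) ^ 2) := by
      funext x
      simp [F, sub_eq_add_neg]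
    rw [heq]
    exact key
  refine ⟨hconc, ?_⟩
  intro x hx y hy hfx hfy
  by_contra hne
  set v : Fin n → ℝ := y - x with hv
  have hvne : v ≠ 0 := sub_ne_zero.2 (Ne.symm hne)
  set γ : ℝ → (Fin n → ℝ) := fun t => x + t • v with hγdef
  have hγ0 : γ 0 = x := by simp [γ]
  have hγ1 : γ 1 = y := by simp [γ, v]
  have hγderiv : ∀ t : ℝ, HasDerivAt γ v t := by
    intro t
    have h : HasDerivAt (fun t : ℝ => t • v) ((1 : ℝ) • v) t :=
      (hasDerivAt_id t).smul_const v
    simpa [γ] using h.const_add x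
  have hcomb : ∀ t : ℝ, γ t = (1 - t) • x + t • y := by
    intro t
    funext k
    simp [γ, v, Pi.smul_apply, smul_eq_mul]
    ring
  have hseg : ∀ t ∈ Icc (0 : ℝ) 1, γ t ∈ D := by
    intro t ht
    rw [hcomb t]
    exact hDconv hx hy (by linarith [ht.2]) ht.1 (by ring)
  -- g = -F ∘ γ is strictly convex on [0,1]
  set g : ℝ → ℝ := fun t => -F (γ t) with hgdef
  obtain ⟨k1, hk1⟩ : ∃ k, v k ≠ 0 := by
    by_contra h; push_neg at h; exact hvne (funext h)
  have hγinj : ∀ s t : ℝ, s ≠ t → γ s ≠ γ t := by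
    intro s t hst h
    apply hst
    have := congrFun h k1
    simp only [γ, Pi.add_apply, Pi.smul_apply, smul_eq_mul] at this
    have : s * v k1 = t * v k1 := by linarith
    exact mul_right_cancel₀ hk1 this
  have hgconv : StrictConvexOn ℝ (Icc (0 : ℝ) 1) g := by
    refine ⟨convex_Icc 0 1, fun s hs t ht hst a b ha hb hab => ?_⟩
    have hmix : γ (a * s + b * t) = a • γ s + b • γ t := by
      funext k
      simp only [γ, Pi.add_apply, Pi.smul_apply, smul_eq_mul]
      linear_combination (-(x k)) * hab
    have key := hconc.2 (hseg s hs) (hseg t ht) (hγinj s t hst) ha hb hab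
    rw [← hmix] at key
    simp only [g, smul_eq_mul] at key ⊢
    linarith
  -- derivatives of g are zero at 0 and 1
  have hdFx : DifferentiableAt ℝ F x := diffAt_F n x hx
  have hdFy : DifferentiableAt ℝ F y := diffAt_F n y hy
  have hF0 : HasFDerivAt F (0 : (Fin n → ℝ) →L[ℝ] ℝ) x := hfx ▸ hdFx.hasFDerivAt
  have hF1 : HasFDerivAt F (0 : (Fin n → ℝ) →L[ℝ] ℝ) y := hfy ▸ hdFy.hasFDerivAt
  have hg0 : HasDerivAt g 0 0 := by
    have h0 : HasFDerivAt F (0 : (Fin n → ℝ) →L[ℝ] ℝ) (γ 0) := hγ0 ▸ hF0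
    have := (h0.comp_hasDerivAt 0 (hγderiv 0)).neg
    simp at this
    exact this
  have hg1 : HasDerivAt g 0 1 := by
    have h1 : HasFDerivAt F (0 : (Fin n → ℝ) →L[ℝ] ℝ) (γ 1) := hγ1 ▸ hF1
    have := (h1.comp_hasDerivAt 1 (hγderiv 1)).neg
    simp at this
    exact this
  have hm0 : (0 : ℝ) ∈ Icc (0 : ℝ) 1 := by norm_num
  have hmh : (1 / 2 : ℝ) ∈ Icc (0 : ℝ) 1 := by norm_num
  have hm1 : (1 : ℝ) ∈ Icc (0 : ℝ) 1 := by norm_num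
  have hA : (0 : ℝ) ≤ slope g 0 (1 / 2) :=
    hgconv.convexOn.le_slope_of_hasDerivAt hm0 hmh (by norm_num) hg0
  have hB : slope g (1 / 2) 1 ≤ 0 :=
    hgconv.convexOn.slope_le_of_hasDerivAt hmh hm1 (by norm_num) hg1
  have hC := hgconv.slope_strict_mono_adjacent hm0 hm1
    (show (0 : ℝ) < 1 / 2 by norm_num) (show (1 / 2 : ℝ) < 1 by norm_num)
  rw [slope_def_field] at hA hB
  norm_num at hA hB hC
  linarith
end

section
/- Let α > −1. The function ln f(x⃗) = ∑_{i<j} ln(x_j − x_i) + ∑_{k=1}^n (α+1)/2 · ln x_k − (1/2)∑_{k=1}^n x_k is strictly concave on D_n = {x⃗ ∈ ℝⁿ : 0 < x_1 < ... < x_n}, and hence has at most one critical point in D_n. -/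
open Set Filter Topology

/-- For a concave function on `[0,1]` with derivative `0` at `0`, every value is ≤ `g 0`. -/
lemma aux_le_left (g : ℝ → ℝ) (hg : ConcaveOn ℝ (Set.Icc (0:ℝ) 1) g)
    (h0 : HasDerivAt g 0 0) : ∀ z ∈ Set.Ioc (0:ℝ) 1, g z ≤ g 0 := by
  intro z hz
  have hz0 : (0:ℝ) < z := hz.1
  have key : ∀ t ∈ Set.Ioo (0:ℝ) z, (g z - g 0) / z ≤ slope g 0 t := by
    intro t ht
    have ht0 : (0:ℝ) < t := ht.1
    have htz : t < z := ht.2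
    have hadj := hg.slope_anti_adjacent (x := 0) (y := t) (z := z)
      ⟨le_refl _, zero_le_one⟩ ⟨hz.1.le, hz.2⟩ ht0 htz
    rw [slope_def_field]
    simp only [sub_zero] at hadj ⊢
    set S := (g t - g 0) / t with hS
    have h1 : g z - g t ≤ (z - t) * S := by
      rw [div_le_iff₀ (by linarith)] at hadj; linarith
    have h2 : g t - g 0 = t * S := by rw [hS]; field_simp
    rw [div_le_iff₀ hz0]; linarith
  have hslope : Tendsto (slope g 0) (𝓝[>] (0:ℝ)) (𝓝 0) :=
    (hasDerivAt_iff_tendsto_slope.1 h0).mono_left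
      (nhdsWithin_mono _ (fun x hx => ne_of_gt hx))
  have hev : ∀ᶠ t in 𝓝[>] (0:ℝ), (g z - g 0) / z ≤ slope g 0 t := by
    filter_upwards [Ioo_mem_nhdsGT_of_mem (⟨le_refl _, hz0⟩ : (0:ℝ) ∈ Set.Ico 0 z)]
      with t ht using key t ht
  have hle : (g z - g 0) / z ≤ 0 := ge_of_tendsto hslope hev
  rw [div_le_iff₀ hz0] at hle
  linarith

/-- For a concave function on `[0,1]` with derivative `0` at `1`, we have `g 0 ≤ g 1`. -/
lemma aux_le_right (g : ℝ → ℝ) (hg : ConcaveOn ℝ (Set.Icc (0:ℝ) 1) g)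
    (h1 : HasDerivAt g 0 1) : g 0 ≤ g 1 := by
  have key : ∀ t ∈ Set.Ioo (0:ℝ) 1, slope g 1 t ≤ g 1 - g 0 := by
    intro t ht
    have ht0 : (0:ℝ) < t := ht.1
    have ht1 : t < 1 := ht.2
    have hadj := hg.slope_anti_adjacent (x := 0) (y := t) (z := 1)
      ⟨le_refl _, zero_le_one⟩ ⟨zero_le_one, le_refl _⟩ ht0 ht1
    rw [slope_def_field]
    simp only [sub_zero] at hadj
    have heq : (g t - g 1) / (t - 1) = (g 1 - g t) / (1 - t) := by
      rw [← neg_div_neg_eq]; ring_nf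
    rw [heq]
    have hne1 : (1:ℝ) - t ≠ 0 := by linarith
    set S := (g 1 - g t) / (1 - t) with hS
    have h2 : g 1 - g t = (1 - t) * S := by
      rw [hS]; field_simp
    have h3 : S * t ≤ g t - g 0 := by
      rw [← le_div_iff₀ ht0]; exact hadj
    nlinarith
  have hslope : Tendsto (slope g 1) (𝓝[<] (1:ℝ)) (𝓝 0) :=
    (hasDerivAt_iff_tendsto_slope.1 h1).mono_left
      (nhdsWithin_mono _ (fun x hx => ne_of_lt hx))
  have hev : ∀ᶠ t in 𝓝[<] (1:ℝ), slope g 1 t ≤ g 1 - g 0 := by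
    filter_upwards [Ioo_mem_nhdsLT_of_mem (⟨zero_lt_one, le_refl _⟩ : (1:ℝ) ∈ Set.Ioc 0 1)]
      with t ht using key t ht
  have := le_of_tendsto hslope hev
  linarith

/-- A strictly concave function on `[0,1]` cannot have zero derivative at both endpoints. -/
lemma aux_no_two_crit (g : ℝ → ℝ) (hg : StrictConcaveOn ℝ (Set.Icc (0:ℝ) 1) g)
    (h0 : HasDerivAt g 0 0) (h1 : HasDerivAt g 0 1) : False := by
  have hA := aux_le_left g hg.concaveOn h0
  have hB := aux_le_right g hg.concaveOn h1
  have h10 : g 0 ≤ g 1 := hB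
  have h0m : (0:ℝ) ∈ Set.Icc (0:ℝ) 1 := ⟨le_refl _, zero_le_one⟩
  have h1m : (1:ℝ) ∈ Set.Icc (0:ℝ) 1 := ⟨zero_le_one, le_refl _⟩
  have hne01 : (0:ℝ) ≠ 1 := by norm_num
  have hhalf := hg.2 h0m h1m hne01 one_half_pos one_half_pos (by norm_num)
  have harg : (1/2 : ℝ) • (0:ℝ) + (1/2 : ℝ) • (1:ℝ) = 1/2 := by norm_num
  rw [harg] at hhalf
  simp only [smul_eq_mul] at hhalf
  have h2 := hA (1/2) ⟨by norm_num, by norm_num⟩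
  linarith

lemma combine_aux (a b A1 A2 A3 B1 B2 B3 C1 C2 C3 : ℝ)
    (h1 : a * A1 + b * B1 ≤ C1) (h2 : a * A2 + b * B2 < C2)
    (h3 : a * A3 + b * B3 = C3) :
    a * (A1 + A2 - A3) + b * (B1 + B2 - B3) < C1 + C2 - C3 := by nlinarith

theorem stmt_14 (n : ℕ) (hn : 1 ≤ n) (α : ℝ) (hα : -1 < α)
    (F : (Fin n → ℝ) → ℝ)
    (hF : F = fun x => (∑ i, ∑ j ∈ Finset.univ.filter (fun j => i < j),
        Real.log (x j - x i)) + (∑ k, (α + 1) / 2 * Real.log (x k))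
      - (1 / 2) * ∑ k, x k)
    (D : Set (Fin n → ℝ))
    (hD : D = {x | StrictMono x ∧ ∀ k, 0 < x k}) :
    StrictConcaveOn ℝ D F ∧
      ∀ x ∈ D, ∀ y ∈ D, fderiv ℝ F x = 0 → fderiv ℝ F y = 0 → x = y := by
  have hc : (0:ℝ) < (α + 1) / 2 := by linarith
  -- convexity of D
  have hDconv : Convex ℝ D := by
    rw [hD]
    intro x hx y hy a b ha hb hab
    obtain ⟨hxm, hxp⟩ := hx
    obtain ⟨hym, hyp⟩ := hy
    constructor
    · intro i j hij
      have h1 := hxm hij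
      have h2 := hym hij
      simp only [Pi.add_apply, Pi.smul_apply, smul_eq_mul]
      rcases ha.eq_or_lt with h | h
      · have hb1 : b = 1 := by linarith
        rw [← h, hb1]; simpa using h2
      · have := mul_lt_mul_of_pos_left h1 h
        have := mul_le_mul_of_nonneg_left h2.le hb
        linarith
    · intro k
      have h1 := hxp k
      have h2 := hyp k
      simp only [Pi.add_apply, Pi.smul_apply, smul_eq_mul]
      rcases ha.eq_or_lt with h | h
      · have hb1 : b = 1 := by linarith
        rw [← h, hb1]; simpa using h2
      · have := mul_pos h h1
        have := mul_nonneg hb h2.le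
        linarith
  -- strict concavity
  have hSC : StrictConcaveOn ℝ D F := by
    refine ⟨hDconv, ?_⟩
    intro x hx y hy hne a b ha hb hab
    rw [hD] at hx hy
    obtain ⟨hxm, hxp⟩ := hx
    obtain ⟨hym, hyp⟩ := hy
    simp only [hF, smul_eq_mul]
    apply combine_aux
    -- first sum : pairwise logs, concave
    · rw [Finset.mul_sum, Finset.mul_sum, ← Finset.sum_add_distrib]
      apply Finset.sum_le_sum
      intro i _
      rw [Finset.mul_sum, Finset.mul_sum, ← Finset.sum_add_distrib]
      apply Finset.sum_le_sum
      intro j hj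
      have hij : i < j := (Finset.mem_filter.1 hj).2
      have hp : x j - x i ∈ Set.Ioi (0:ℝ) := sub_pos.2 (hxm hij)
      have hq : y j - y i ∈ Set.Ioi (0:ℝ) := sub_pos.2 (hym hij)
      have hlog := strictConcaveOn_log_Ioi.concaveOn.2 hp hq ha.le hb.le hab
      simp only [smul_eq_mul] at hlog
      have hz : (a • x + b • y) j - (a • x + b • y) i
          = a * (x j - x i) + b * (y j - y i) := by
        simp only [Pi.add_apply, Pi.smul_apply, smul_eq_mul]; ring
      rw [hz]
      exact hlog
    -- second sum : coordinate logs, strictly concave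
    · rw [Finset.mul_sum, Finset.mul_sum, ← Finset.sum_add_distrib]
      have hex : ∃ k, x k ≠ y k := Function.ne_iff.1 hne
      obtain ⟨k₀, hk₀⟩ := hex
      apply Finset.sum_lt_sum
      · intro k _
        have hlog := strictConcaveOn_log_Ioi.concaveOn.2
          (Set.mem_Ioi.2 (hxp k)) (Set.mem_Ioi.2 (hyp k)) ha.le hb.le hab
        simp only [smul_eq_mul] at hlog
        have hz : (a • x + b • y) k = a * x k + b * y k := by
          simp only [Pi.add_apply, Pi.smul_apply, smul_eq_mul]
        rw [hz]
        nlinarith [mul_le_mul_of_nonneg_left hlog hc.le]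
      · refine ⟨k₀, Finset.mem_univ _, ?_⟩
        have hlog := strictConcaveOn_log_Ioi.2
          (Set.mem_Ioi.2 (hxp k₀)) (Set.mem_Ioi.2 (hyp k₀)) hk₀ ha hb hab
        simp only [smul_eq_mul] at hlog
        have hz : (a • x + b • y) k₀ = a * x k₀ + b * y k₀ := by
          simp only [Pi.add_apply, Pi.smul_apply, smul_eq_mul]
        rw [hz]
        nlinarith [mul_lt_mul_of_pos_left hlog hc]
    -- linear part
    · have hz : ∀ k, (a • x + b • y) k = a * x k + b * y k := by
        intro k; simp only [Pi.add_apply, Pi.smul_apply, smul_eq_mul]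
      simp only [hz]
      rw [Finset.sum_add_distrib, ← Finset.mul_sum, ← Finset.mul_sum]
      ring
  refine ⟨hSC, ?_⟩
  -- uniqueness of critical points
  intro x hx y hy hdx hdy
  by_contra hne
  -- F is differentiable on D
  have hdiff : ∀ z ∈ D, DifferentiableAt ℝ F z := by
    intro z hz
    rw [hD] at hz
    obtain ⟨hzm, hzp⟩ := hz
    rw [hF]
    apply DifferentiableAt.sub
    · apply DifferentiableAt.add
      · apply DifferentiableAt.fun_sum
        intro i _
        apply DifferentiableAt.fun_sum
        intro j hj
        have hij : i < j := (Finset.mem_filter.1 hj).2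
        have hpos : z j - z i > 0 := sub_pos.2 (hzm hij)
        exact DifferentiableAt.log
          (((ContinuousLinearMap.proj j : (Fin n → ℝ) →L[ℝ] ℝ).differentiableAt).sub
            ((ContinuousLinearMap.proj i : (Fin n → ℝ) →L[ℝ] ℝ).differentiableAt))
          (ne_of_gt hpos)
      · apply DifferentiableAt.fun_sum
        intro k _
        exact DifferentiableAt.const_mul
          (DifferentiableAt.log
            ((ContinuousLinearMap.proj k : (Fin n → ℝ) →L[ℝ] ℝ).differentiableAt)
            (ne_of_gt (hzp k))) _
    · exact DifferentiableAt.const_mul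
        (DifferentiableAt.fun_sum fun k _ =>
          (ContinuousLinearMap.proj k : (Fin n → ℝ) →L[ℝ] ℝ).differentiableAt) _
  -- restrict to the segment
  set v : Fin n → ℝ := y - x with hv
  set γ : ℝ → (Fin n → ℝ) := fun t => x + t • v with hγ
  have hγ0 : γ 0 = x := by simp [hγ]
  have hγ1 : γ 1 = y := by simp [hγ, hv]
  have hγcomb : ∀ s : ℝ, γ s = (1 - s) • x + s • y := by
    intro s; funext k
    simp only [hγ, hv, Pi.add_apply, Pi.smul_apply, Pi.sub_apply, smul_eq_mul]
    ring
  have hγmem : ∀ s ∈ Set.Icc (0:ℝ) 1, γ s ∈ D := by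
    intro s hs
    rw [hγcomb]
    exact hDconv hx hy (by linarith [hs.2]) hs.1 (by ring)
  have hvne : v ≠ 0 := by
    intro h
    apply hne
    have : y - x = 0 := h
    funext k
    have := congrFun this k
    simp only [Pi.sub_apply, Pi.zero_apply] at this
    linarith
  have hγinj : Function.Injective γ := by
    intro s t hst
    by_contra hstne
    apply hvne
    have : (s - t) • v = 0 := by
      have := congrArg (· - (x + t • v)) hst
      simpa [hγ, sub_smul, add_sub_add_left_eq_sub] using this
    rcases smul_eq_zero.1 this with h | h
    · exact absurd (sub_eq_zero.1 h) hstne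
    · exact absurd h hvne
  set g : ℝ → ℝ := fun t => F (γ t) with hg
  -- g is strictly concave on [0,1]
  have hgSC : StrictConcaveOn ℝ (Set.Icc (0:ℝ) 1) g := by
    refine ⟨convex_Icc _ _, ?_⟩
    intro s hs t ht hst a b ha hb hab
    have hkey : γ (a * s + b * t) = a • γ s + b • γ t := by
      funext k
      simp only [hγ, Pi.add_apply, Pi.smul_apply, smul_eq_mul]
      linear_combination (-(x k)) * hab
    have hne' : γ s ≠ γ t := fun h => hst (hγinj h)
    have := hSC.2 (hγmem s hs) (hγmem t ht) hne' ha hb hab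
    simp only [hg, smul_eq_mul] at this ⊢
    rw [hkey]
    exact this
  -- derivative of g at 0 and 1 is zero
  have hγderiv : ∀ t : ℝ, HasDerivAt γ v t := by
    intro t
    have : HasDerivAt (fun t : ℝ => t • v) ((1:ℝ) • v) t :=
      (hasDerivAt_id t).smul_const v
    simpa [hγ] using this.const_add x
  have hg0 : HasDerivAt g 0 0 := by
    have hd : HasFDerivAt F (fderiv ℝ F x) x := (hdiff x hx).hasFDerivAt
    rw [hdx] at hd
    have hd' : HasFDerivAt F (0 : (Fin n → ℝ) →L[ℝ] ℝ) (γ 0) := by rw [hγ0]; exact hd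
    have := hd'.comp_hasDerivAt 0 (hγderiv 0)
    simp only [ContinuousLinearMap.zero_apply] at this; exact this
  have hg1 : HasDerivAt g 0 1 := by
    have hd : HasFDerivAt F (fderiv ℝ F y) y := (hdiff y hy).hasFDerivAt
    rw [hdy] at hd
    have hd' : HasFDerivAt F (0 : (Fin n → ℝ) →L[ℝ] ℝ) (γ 1) := by rw [hγ1]; exact hd
    have := hd'.comp_hasDerivAt 1 (hγderiv 1)
    simp only [ContinuousLinearMap.zero_apply] at this; exact this
  exact aux_no_two_crit g hgSC hg0 hg1
end

section
/- Let x_1 < x_2 < ... < x_n be real numbers satisfying ∑_{j ≠ k} 1/(x_k − x_j) = x_k for each k. Then ∑_{k=1}^n x_k² = n(n−1)/2. -/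
theorem stmt_18 (n : ℕ) (hn : 1 ≤ n) (x : Fin n → ℝ) (hx : StrictMono x)
    (heq : ∀ k : Fin n, ∑ j ∈ Finset.univ.erase k, 1 / (x k - x j) - x k = 0) :
    ∑ k, (x k) ^ 2 = n * (n - 1) / 2 := by
  have hinj := hx.injective
  have hne : ∀ k j : Fin n, j ≠ k → x k - x j ≠ 0 := fun k j h =>
    sub_ne_zero.mpr (fun e => h (hinj e.symm))
  have h1 : ∀ k, ∑ j ∈ Finset.univ.erase k, 1 / (x k - x j) = x k := fun k => by
    have := heq k; linarith
  set S : ℝ := ∑ k, ∑ j ∈ Finset.univ.erase k, x k / (x k - x j) with hS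
  have hsq : ∑ k, (x k) ^ 2 = S := by
    rw [hS]
    refine Finset.sum_congr rfl fun k _ => ?_
    have : ∑ j ∈ Finset.univ.erase k, x k / (x k - x j)
        = x k * ∑ j ∈ Finset.univ.erase k, 1 / (x k - x j) := by
      rw [Finset.mul_sum]
      refine Finset.sum_congr rfl fun j _ => ?_
      ring
    rw [this, h1 k]; ring
  have hswap : S = ∑ k, ∑ j ∈ Finset.univ.erase k, x j / (x j - x k) := by
    rw [hS]
    rw [Finset.sum_comm' (s := Finset.univ) (t := fun k => Finset.univ.erase k)
      (t' := Finset.univ) (s' := fun j => Finset.univ.erase j)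
      (fun a b => by simp [Finset.mem_erase]; tauto)]
  have h2S : S + S = n * (n - 1) := by
    nth_rewrite 2 [hswap]
    rw [← Finset.sum_add_distrib]
    have : ∀ k : Fin n, (∑ j ∈ Finset.univ.erase k, x k / (x k - x j))
        + ∑ j ∈ Finset.univ.erase k, x j / (x j - x k) = (n : ℝ) - 1 := by
      intro k
      rw [← Finset.sum_add_distrib]
      have : ∀ j ∈ Finset.univ.erase k, x k / (x k - x j) + x j / (x j - x k) = 1 := by
        intro j hj
        have hj' : j ≠ k := (Finset.mem_erase.mp hj).1
        have h1 := hne k j hj'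
        have h2 := hne j k (Ne.symm hj')
        field_simp
        ring
      rw [Finset.sum_congr rfl this, Finset.sum_const]
      rw [Finset.card_erase_of_mem (Finset.mem_univ k), Finset.card_univ, Fintype.card_fin]
      rw [nsmul_eq_mul, Nat.cast_sub hn]
      push_cast
      ring
    rw [Finset.sum_congr rfl (fun k _ => this k), Finset.sum_const, Finset.card_univ,
      Fintype.card_fin]
    ring
  rw [hsq]
  linarith
end
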